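/- One has F_3(x) = (1 + 2x + 2x² + x³ + x⁴)(1 + x + 2x² + 2x³ + x⁴) / ((1−x)⁶(1+x)³(1+x+x²)⁴), where F_3(x) = F_2(x, x³) with F_r(x,y) defined by F_0(x,y)=1/(1−y)² and F_r(x,y) = (F_{r−1}(x,x^r)x^r − F_{r−1}(x,y)y)/((x^r−y)(1−y)). -/

import Mathlib

/-- The recursively defined functions `F_r(x,y)`:
`F_0(x,y) = 1/(1-y)²` and
`F_r(x,y) = (F_{r-1}(x,x^r)·x^r − F_{r-1}(x,y)·y) / ((x^r − y)(1 − y))`. -/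
noncomputable def F {K : Type*} [Field K] : ℕ → K → K → K
  | 0, _, y => 1 / (1 - y) ^ 2
  | r + 1, x, y =>
      (F r x (x ^ (r + 1)) * x ^ (r + 1) - F r x y * y) / ((x ^ (r + 1) - y) * (1 - y))


set_option maxHeartbeats 4000000 in
/-- `F_3(x) = F_2(x, x³) = (1+2x+2x²+x³+x⁴)(1+x+2x²+2x³+x⁴)/((1−x)⁶(1+x)³(1+x+x²)⁴)`
as an identity of rational functions in one variable. -/
theorem stmt16 :
    letI K := FractionRing (Polynomial ℚ)
    let X : K := algebraMap (Polynomial ℚ) K Polynomial.X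
    F 2 X (X ^ 3) =
      (1 + 2 * X + 2 * X ^ 2 + X ^ 3 + X ^ 4) * (1 + X + 2 * X ^ 2 + 2 * X ^ 3 + X ^ 4) /
        ((1 - X) ^ 6 * (1 + X) ^ 3 * (1 + X + X ^ 2) ^ 4) := by
  intro X
  have hinj := IsFractionRing.injective (Polynomial ℚ) (FractionRing (Polynomial ℚ))
  have key : ∀ p : Polynomial ℚ, Polynomial.eval 2 p ≠ 0 →
      (algebraMap (Polynomial ℚ) (FractionRing (Polynomial ℚ))) p ≠ 0 := by
    intro p hp
    exact (map_ne_zero_iff _ hinj).mpr (fun h => hp (by simp [h]))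
  have h1 : (1 : FractionRing (Polynomial ℚ)) - X ≠ 0 := by
    have := key (1 - Polynomial.X) (by norm_num)
    simpa [X, map_sub] using this
  have h2 : (1 : FractionRing (Polynomial ℚ)) - X ^ 2 ≠ 0 := by
    have := key (1 - Polynomial.X ^ 2) (by norm_num)
    simpa [X, map_sub, map_pow] using this
  have h3 : (1 : FractionRing (Polynomial ℚ)) - X ^ 3 ≠ 0 := by
    have := key (1 - Polynomial.X ^ 3) (by norm_num)
    simpa [X, map_sub, map_pow] using this
  have h4 : X - X ^ 2 ≠ 0 := by
    have := key (Polynomial.X - Polynomial.X ^ 2) (by norm_num)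
    simpa [X, map_sub, map_pow] using this
  have h5 : X - X ^ 3 ≠ 0 := by
    have := key (Polynomial.X - Polynomial.X ^ 3) (by norm_num)
    simpa [X, map_sub, map_pow] using this
  have h6 : X ^ 2 - X ^ 3 ≠ 0 := by
    have := key (Polynomial.X ^ 2 - Polynomial.X ^ 3) (by norm_num)
    simpa [X, map_sub, map_pow] using this
  have h7 : (1 : FractionRing (Polynomial ℚ)) + X ≠ 0 := by
    have := key (1 + Polynomial.X) (by norm_num)
    simpa [X, map_add] using this
  have h8 : (1 : FractionRing (Polynomial ℚ)) + X + X ^ 2 ≠ 0 := by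
    have := key (1 + Polynomial.X + Polynomial.X ^ 2) (by norm_num)
    simpa [X, map_add, map_pow] using this
  have hX0 : X ≠ 0 := by
    have := key Polynomial.X (by norm_num)
    simpa [X] using this
  have e12 : F 1 X (X ^ 2) = (1 + X + X ^ 2) / ((1 - X) ^ 4 * (1 + X) ^ 3) := by
    show (1 / (1 - X ^ 1) ^ 2 * X ^ 1 - 1 / (1 - X ^ 2) ^ 2 * X ^ 2) /
        ((X ^ 1 - X ^ 2) * (1 - X ^ 2)) = _
    rw [pow_one]
    field_simp
    ring
  have e13 : F 1 X (X ^ 3) = (1 + X + X ^ 2 + X ^ 3) / ((1 - X) ^ 4 * (1 + X + X ^ 2) ^ 3) := by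
    show (1 / (1 - X ^ 1) ^ 2 * X ^ 1 - 1 / (1 - X ^ 3) ^ 2 * X ^ 3) /
        ((X ^ 1 - X ^ 3) * (1 - X ^ 3)) = _
    rw [pow_one]
    field_simp
    ring
  have h2' : F 2 X (X ^ 3) =
      (F 1 X (X ^ 2) * X ^ 2 - F 1 X (X ^ 3) * X ^ 3) / ((X ^ 2 - X ^ 3) * (1 - X ^ 3)) := rfl
  have hD1 : ((1 : FractionRing (Polynomial ℚ)) - X) ^ 4 * (1 + X) ^ 3 ≠ 0 :=
    mul_ne_zero (pow_ne_zero _ h1) (pow_ne_zero _ h7)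
  have hD2 : ((1 : FractionRing (Polynomial ℚ)) - X) ^ 4 * (1 + X + X ^ 2) ^ 3 ≠ 0 :=
    mul_ne_zero (pow_ne_zero _ h1) (pow_ne_zero _ h8)
  have hD3 : (X ^ 2 - X ^ 3) * (1 - X ^ 3) ≠ 0 := mul_ne_zero h6 h3
  have hR : ((1 : FractionRing (Polynomial ℚ)) - X) ^ 6 * (1 + X) ^ 3 * (1 + X + X ^ 2) ^ 4 ≠ 0 :=
    mul_ne_zero (mul_ne_zero (pow_ne_zero _ h1) (pow_ne_zero _ h7)) (pow_ne_zero _ h8)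
  rw [h2', e12, e13, div_mul_eq_mul_div, div_mul_eq_mul_div, div_sub_div _ _ hD1 hD2, div_div,
    div_eq_div_iff (mul_ne_zero (mul_ne_zero hD1 hD2) hD3) hR]
  ring
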